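/- A string rewriting system R over a finite alphabet Σ is terminating on Σ* if and only if R is terminating on RFC(R), the set of right-hand sides of forward closures of R. -/
import Mathlib

namespace LocalTermSRS

/-- One-step rewrite relation of a string rewriting system. -/
def SStep {Γ : Type} (R : Set (List Γ × List Γ)) (u v : List Γ) : Prop :=
  ∃ (x y l r : List Γ), (l, r) ∈ R ∧ u = x ++ l ++ y ∧ v = x ++ r ++ y

/-- The right-hand sides of forward closures of an SRS `R`: the smallest set
containing the right-hand sides of `R`, closed under rewriting and under
right extension. -/
inductive RFC {Γ : Type} (R : Set (List Γ × List Γ)) : List Γ → Prop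
  | rhs {l r : List Γ} : (l, r) ∈ R → RFC R r
  | step {u v : List Γ} : RFC R u → SStep R u v → RFC R v
  | ext {u l1 l2 r : List Γ} :
      RFC R (u ++ l1) → (l1 ++ l2, r) ∈ R → l1 ≠ [] → RFC R (u ++ r)

section Aux
variable {Γ : Type} {R : Set (List Γ × List Γ)}

/-- An infinite rewrite sequence starts at `w`. -/
def Immortal (R : Set (List Γ × List Γ)) (w : List Γ) : Prop :=
  ∃ f : ℕ → List Γ, f 0 = w ∧ ∀ n : ℕ, SStep R (f n) (f (n + 1))

lemma sstep_append_left {s s' : List Γ} (p : List Γ) (h : SStep R s s') :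
    SStep R (p ++ s) (p ++ s') := by
  obtain ⟨x, y, l, r, hR, hu, hv⟩ := h
  exact ⟨p ++ x, y, l, r, hR, by simp [hu, List.append_assoc],
    by simp [hv, List.append_assoc]⟩

lemma immortal_append_left {s : List Γ} (p : List Γ) (h : Immortal R s) :
    Immortal R (p ++ s) := by
  obtain ⟨f, hf0, hfs⟩ := h
  exact ⟨fun n => p ++ f n, by simp [hf0], fun n => sstep_append_left p (hfs n)⟩

lemma immortal_of_step {w w' : List Γ} (h : SStep R w w') (h' : Immortal R w') :
    Immortal R w := by
  obtain ⟨f, hf0, hfs⟩ := h'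
  refine ⟨fun n => Nat.casesOn n w f, rfl, fun n => ?_⟩
  cases n with
  | zero => simpa [hf0] using h
  | succ m => exact hfs m

/-- shifted tails of an infinite derivation are immortal -/
lemma immortal_tail {f : ℕ → List Γ} (hfs : ∀ n, SStep R (f n) (f (n + 1))) (k : ℕ) :
    Immortal R (f k) :=
  ⟨fun n => f (n + k), by simp, fun n => by
    have := hfs (n + k); simpa [Nat.add_right_comm] using this⟩

/-- classical: no infinite sequence implies accessibility -/
lemma acc_of_not_immortal {w : List Γ} (h : ¬ Immortal R w) :
    Acc (fun a b => SStep R b a) w := by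
  by_contra hacc
  apply h
  have key : ∀ b : {b : List Γ // ¬ Acc (fun a b => SStep R b a) b},
      ∃ c : {c : List Γ // ¬ Acc (fun a b => SStep R b a) c}, SStep R b.1 c.1 := by
    rintro ⟨b, hb⟩
    by_contra hc
    push_neg at hc
    exact hb ⟨b, fun c hcb => by
      by_contra hcc
      exact (hc ⟨c, hcc⟩) hcb⟩
  let F : ℕ → {b : List Γ // ¬ Acc (fun a b => SStep R b a) b} := fun n =>
    Nat.rec ⟨w, hacc⟩ (fun _ b => (key b).choose) n
  refine ⟨fun n => (F n).1, rfl, fun n => ?_⟩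
  exact (key (F n)).choose_spec

/-- combined relation: a rewrite step or a proper suffix -/
def Comb (R : Set (List Γ × List Γ)) (v' v : List Γ) : Prop :=
  SStep R v v' ∨ (v' ≠ v ∧ v' <:+ v)

lemma acc_comb_aux :
    ∀ v : List Γ, Acc (fun a b => SStep R b a) v →
      ∀ s, s <:+ v → Acc (Comb R) s := by
  intro v hacc
  induction hacc with
  | intro v hv IH =>
    have inner : ∀ n : ℕ, ∀ s : List Γ, s.length = n → s <:+ v → Acc (Comb R) s := by
      intro n
      induction n using Nat.strong_induction_on with
      | _ n IH2 =>
        intro s hlen hs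
        constructor
        intro s' hs'
        rcases hs' with hstep | ⟨hne, hsuf⟩
        · obtain ⟨p, hp⟩ := hs
          have hv' : SStep R v (p ++ s') := by
            rw [← hp]; exact sstep_append_left p hstep
          exact IH (p ++ s') hv' s' (List.suffix_append p s')
        · have hle : s'.length ≤ s.length := hsuf.length_le
          have hlt : s'.length < n := by
            rcases lt_or_eq_of_le hle with h | h
            · omega
            · exact absurd (List.IsSuffix.eq_of_length hsuf h) hne
          exact IH2 s'.length hlt s' rfl (hsuf.trans hs)
    exact fun s hs => inner s.length s rfl hs

lemma acc_comb {v : List Γ} (h : ¬ Immortal R v) : Acc (Comb R) v :=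
  acc_comb_aux v (acc_of_not_immortal h) v (List.suffix_refl v)

open Classical in
/-- track the left part of a decomposition through a derivation, as long as
steps happen inside the left part -/
noncomputable def track (R : Set (List Γ × List Γ)) (f : ℕ → List Γ) (v u : List Γ) :
    ℕ → Option (List Γ)
  | 0 => some u
  | n+1 => (track R f v u n).bind fun uk =>
      if h : ∃ u', SStep R uk u' ∧ f (n+1) = u' ++ v then some h.choose else none

open Classical in
lemma track_succ (f : ℕ → List Γ) (v u : List Γ) (n : ℕ) :
    track R f v u (n+1) = (track R f v u n).bind fun uk =>
      if h : ∃ u', SStep R uk u' ∧ f (n+1) = u' ++ v then some h.choose else none := rfl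

lemma track_step {f : ℕ → List Γ} {v u : List Γ} {n : ℕ} {uk u' : List Γ}
    (h1 : track R f v u n = some uk) (h2 : track R f v u (n+1) = some u') :
    SStep R uk u' ∧ f (n+1) = u' ++ v := by
  rw [track_succ, h1, Option.bind_some] at h2
  by_cases h : ∃ w, SStep R uk w ∧ f (n+1) = w ++ v
  · rw [dif_pos h] at h2
    obtain ⟨hs, hf⟩ := h.choose_spec
    cases h2
    exact ⟨hs, hf⟩
  · rw [dif_neg h] at h2
    exact absurd h2 (by simp)

lemma track_inv {f : ℕ → List Γ} {v u : List Γ} (hu : RFC R u) (hf0 : f 0 = u ++ v) :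
    ∀ n uk, track R f v u n = some uk → RFC R uk ∧ f n = uk ++ v := by
  intro n
  induction n with
  | zero => intro uk h; cases h; exact ⟨hu, hf0⟩
  | succ m IH =>
    intro uk h
    have hm : ∃ um, track R f v u m = some um := by
      rcases hm : track R f v u m with _ | um
      · rw [track_succ, hm] at h; simp at h
      · exact ⟨um, rfl⟩
    obtain ⟨um, hum⟩ := hm
    obtain ⟨hRum, _⟩ := IH um hum
    obtain ⟨hs, hf⟩ := track_step hum h
    exact ⟨RFC.step hRum hs, hf⟩

/-- **Main lemma.** If `u ∈ RFC`, `v` is accessible under `Comb`, and `u ++ v` is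
immortal, then some RFC element is immortal. -/
lemma main_lemma :
    ∀ v : List Γ, Acc (Comb R) v → ∀ u, RFC R u → Immortal R (u ++ v) →
      ∃ z, RFC R z ∧ Immortal R z := by
  intro v hacc
  induction hacc with
  | intro v hv IH =>
    intro u hu himm
    obtain ⟨f, hf0, hfs⟩ := himm
    by_cases hA : ∀ n, ∃ uk, track R f v u n = some uk
    · -- all steps stay inside the left part: u itself is immortal
      obtain ⟨F, hF⟩ : ∃ F : ℕ → List Γ, ∀ n, track R f v u n = some (F n) :=
        ⟨fun n => (hA n).choose, fun n => (hA n).choose_spec⟩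
      have hF0 : F 0 = u := by
        have h0 : track R f v u 0 = some u := rfl
        rw [hF 0] at h0
        exact Option.some_inj.mp h0
      have himmu : Immortal R u := ⟨F, hF0, fun n => (track_step (hF n) (hF (n+1))).1⟩
      exact ⟨u, hu, himmu⟩
    · push_neg at hA
      obtain ⟨m, hm⟩ := hA
      have hm' : track R f v u m = none := by
        rcases h : track R f v u m with _ | uk
        · rfl
        · exact absurd h (hm uk)
      -- least such m; m ≠ 0
      have h0ne : ∃ m, track R f v u m = none := ⟨m, hm'⟩
      classical
      have hknone := Nat.find_spec h0ne
      have hkpos : Nat.find h0ne ≠ 0 := by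
        intro h
        rw [h] at hknone
        exact absurd hknone (by simp [track])
      obtain ⟨k', hkk⟩ : ∃ k', Nat.find h0ne = k' + 1 := ⟨Nat.find h0ne - 1, by omega⟩
      rw [hkk] at hknone
      have hk'some : ∃ uk, track R f v u k' = some uk := by
        rcases h : track R f v u k' with _ | uk
        · exact absurd h (Nat.find_min h0ne (by omega))
        · exact ⟨uk, rfl⟩
      obtain ⟨uk, huk⟩ := hk'some
      obtain ⟨hRuk, hfk⟩ := track_inv hu hf0 k' uk huk
      -- the step k' is not a left-step
      have hnot : ¬ ∃ u', SStep R uk u' ∧ f (k' + 1) = u' ++ v := by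
        intro h
        rw [track_succ, huk, Option.bind_some, dif_pos h] at hknone
        exact absurd hknone (by simp)
      obtain ⟨x, y, l, r, hR, hu1, hv1⟩ := hfs k'
      rw [hfk] at hu1
      -- u_k ++ v = x ++ (l ++ y)
      have hu2 : uk ++ v = x ++ (l ++ y) := by simp [hu1, List.append_assoc]
      rcases List.append_eq_append_iff.mp hu2 with ⟨x2, hx2, hv2⟩ | ⟨c, hc, hcy⟩
      · -- x = uk ++ x2, v = x2 ++ (l ++ y) : redex entirely inside v
        have hstepv : SStep R v (x2 ++ r ++ y) :=
          ⟨x2, y, l, r, hR, by simp [hv2, List.append_assoc], rfl⟩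
        have himm' : Immortal R (uk ++ (x2 ++ r ++ y)) := by
          have := immortal_tail hfs (k' + 1)
          rw [hv1, hx2] at this
          simpa [List.append_assoc] using this
        exact IH _ (Or.inl hstepv) uk hRuk himm'
      · -- uk = x ++ c  and  l ++ y = c ++ v
        rcases List.append_eq_append_iff.mp hcy with ⟨a, ha, hya⟩ | ⟨c2, hl2, hvc2⟩
        · -- c = l ++ a, y = a ++ v : redex inside uk, contradiction with hnot
          exfalso
          apply hnot
          refine ⟨x ++ r ++ a, ⟨x, a, l, r, hR, ?_, rfl⟩, ?_⟩
          · simp [hc, ha, List.append_assoc]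
          · simp [hv1, hya, List.append_assoc]
        · -- l = c ++ c2, v = c2 ++ y
          by_cases hc2 : c2 = []
          · -- v = y : redex inside uk (l = c), contradiction with hnot
            exfalso
            apply hnot
            subst hc2
            simp only [List.append_nil] at hl2
            simp only [List.nil_append] at hvc2
            refine ⟨x ++ r, ⟨x, [], l, r, hR, by simp [hc, hl2], by simp⟩, ?_⟩
            simp [hv1, ← hvc2]
          · by_cases hcnil : c = []
            · -- uk = x, v = l ++ y : redex entirely inside v
              subst hcnil
              simp only [List.append_nil] at hc
              simp only [List.nil_append] at hl2
              have hstepv : SStep R v (r ++ y) :=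
                ⟨[], y, l, r, hR, by simp [hvc2, hl2], by simp⟩
              have himm' : Immortal R (uk ++ (r ++ y)) := by
                have := immortal_tail hfs (k' + 1)
                rw [hv1] at this
                simpa [hc, List.append_assoc] using this
              exact IH _ (Or.inl hstepv) uk hRuk himm'
            · -- genuine crossing: uk = x ++ c, l = c ++ c2, v = c2 ++ y
              have hRxr : RFC R (x ++ r) := by
                refine RFC.ext (l1 := c) (l2 := c2) ?_ ?_ hcnil
                · rw [← hc]; exact hRuk
                · rw [← hl2]; exact hR
              have hysuf : y <:+ v := ⟨c2, hvc2.symm⟩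
              have hyne : y ≠ v := by
                intro h
                apply hc2
                have hlen : v.length = c2.length + y.length := by rw [hvc2]; simp
                rw [h] at hlen
                exact List.length_eq_zero_iff.mp (by omega)
              have himm' : Immortal R ((x ++ r) ++ y) := by
                have := immortal_tail hfs (k' + 1)
                rw [hv1] at this
                simpa [List.append_assoc] using this
              exact IH y (Or.inr ⟨hyne, hysuf⟩) (x ++ r) hRxr himm'


lemma immortal_of_empty_lhs {r : List Γ} (hR : ([], r) ∈ R) : Immortal R r := by
  refine ⟨fun n => Nat.rec r (fun _ ih => r ++ ih) n, rfl, fun n => ?_⟩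
  exact ⟨[], Nat.rec r (fun _ ih => r ++ ih) n, [], r, hR, by simp, by simp⟩

end Aux

/-- An SRS `R` over a finite alphabet is terminating on all
words iff it is terminating on `RFC(R)`. -/
theorem srs_terminating_iff_terminating_on_RFC
    {Γ : Type} [Fintype Γ] (R : Set (List Γ × List Γ)) :
    (∀ w : List Γ, ¬ ∃ f : ℕ → List Γ, f 0 = w ∧
        ∀ n : ℕ, SStep R (f n) (f (n + 1))) ↔
    (∀ w : List Γ, RFC R w → ¬ ∃ f : ℕ → List Γ, f 0 = w ∧
        ∀ n : ℕ, SStep R (f n) (f (n + 1))) := by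
  constructor
  · intro h w _
    exact h w
  · intro hRFC w
    intro himm'
    have himm : Immortal R w := himm'
    suffices hz : ∃ z, RFC R z ∧ Immortal R z by
      obtain ⟨z, hzR, hzI⟩ := hz
      exact hRFC z hzR hzI
    clear himm'
    by_cases hemp : ∃ p ∈ R, p.1 = []
    · obtain ⟨⟨l, r⟩, hpR, hl⟩ := hemp
      simp only at hl
      subst hl
      exact ⟨r, RFC.rhs hpR, immortal_of_empty_lhs hpR⟩
    · push_neg at hemp
      have hex : ∃ n, ∃ w : List Γ, w.length = n ∧ Immortal R w := ⟨w.length, w, rfl, himm⟩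
      classical
      obtain ⟨w0, hw0len, hw0imm⟩ := Nat.find_spec hex
      have hmin : ∀ w' : List Γ, w'.length < w0.length → ¬ Immortal R w' := by
        intro w' hlt hImm
        rw [hw0len] at hlt
        exact Nat.find_min hex hlt ⟨w', rfl, hImm⟩
      obtain ⟨f, hf0, hfs⟩ := hw0imm
      have hw0ne : w0 ≠ [] := by
        intro h
        obtain ⟨x, y, l, r, hR, hu, _⟩ := hfs 0
        rw [hf0, h] at hu
        have hx : l = [] := by
          rcases List.append_eq_nil_iff.mp ((List.append_eq_nil_iff.mp hu.symm).1) with ⟨_, h2⟩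
          exact h2
        exact hemp (l, r) hR hx
      obtain ⟨a, s0, hw0⟩ : ∃ a s, w0 = a :: s := by
        cases w0 with
        | nil => exact absurd rfl hw0ne
        | cons a s => exact ⟨a, s, rfl⟩
      have hs0len : s0.length < w0.length := by rw [hw0]; simp
      by_cases hK : ∃ k, ∃ l y rr, (l, rr) ∈ R ∧ f k = l ++ y ∧ f (k+1) = rr ++ y
      · -- there is a first step whose redex is a prefix
        obtain ⟨l, y, rr, hlr, hfk, hfk1⟩ := Nat.find_spec hK
        have hP : ∀ j, (∀ i < j, ¬ ∃ l y rr, (l, rr) ∈ R ∧ f i = l ++ y ∧ f (i+1) = rr ++ y) →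
            ∃ s, f j = a :: s ∧ (Immortal R s → Immortal R s0) := by
          intro j
          induction j with
          | zero => intro _; exact ⟨s0, by rw [hf0, hw0], id⟩
          | succ m IHm =>
            intro hlt
            obtain ⟨sm, hsm, hsim⟩ := IHm (fun i hi => hlt i (by omega))
            obtain ⟨x, y', l', r', hR', hu, hv⟩ := hfs m
            cases x with
            | nil =>
              exact absurd ⟨l', y', r', hR', by simpa using hu, by simpa using hv⟩
                (hlt m (by omega))
            | cons b x' =>
              have hb : a = b ∧ sm = x' ++ (l' ++ y') := by
                rw [hsm] at hu
                simpa using hu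
              refine ⟨x' ++ (r' ++ y'), by simp [hv, hb.1, List.append_assoc], fun hI => ?_⟩
              refine hsim (immortal_of_step ⟨x', y', l', r', hR', ?_, ?_⟩ hI)
              · simp [hb.2, List.append_assoc]
              · simp [List.append_assoc]
        obtain ⟨sk, hsk, hskim⟩ := hP (Nat.find hK) (fun i hi => Nat.find_min hK hi)
        have hlne : l ≠ [] := hemp (l, rr) hlr
        obtain ⟨b, l', rfl⟩ : ∃ b l', l = b :: l' := by
          cases l with
          | nil => exact absurd rfl hlne
          | cons b l' => exact ⟨b, l', rfl⟩
        have hsksplit : sk = l' ++ y := by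
          rw [hsk] at hfk
          simpa using (List.cons.injEq .. ▸ hfk).2
        have hnImmY : ¬ Immortal R y := by
          intro hy
          exact hmin s0 hs0len (hskim (by rw [hsksplit]; exact immortal_append_left l' hy))
        have himmry : Immortal R (rr ++ y) := by
          have := immortal_tail hfs (Nat.find hK + 1)
          rwa [hfk1] at this
        exact main_lemma y (acc_comb hnImmY) rr (RFC.rhs hlr) himmry
      · -- no step ever has a prefix redex: project away the first letter
        exfalso
        push_neg at hK
        have key : ∀ n, ∃ b t t', f n = b :: t ∧ f (n+1) = b :: t' ∧ SStep R t t' := by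
          intro n
          obtain ⟨x, y, l, r, hR, hu, hv⟩ := hfs n
          cases x with
          | nil =>
            exact absurd (by simpa using hv) (hK n l y r hR (by simpa using hu))
          | cons b x' =>
            exact ⟨b, x' ++ (l ++ y), x' ++ (r ++ y),
              by simp [hu, List.append_assoc], by simp [hv, List.append_assoc],
              ⟨x', y, l, r, hR, by simp [List.append_assoc], by simp [List.append_assoc]⟩⟩
        have htail : Immortal R ((f 0).tail) := by
          refine ⟨fun n => (f n).tail, rfl, fun n => ?_⟩
          obtain ⟨b, t, t', h1, h2, h3⟩ := key n
          show SStep R (f n).tail (f (n+1)).tail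
          rw [h1, h2]
          simpa using h3
        rw [hf0, hw0] at htail
        exact hmin s0 hs0len (by simpa using htail)

end LocalTermSRS
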